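/- arXiv:2512.10136 — 3 statements merged into one kernel-verified Lean document; each statement's English description precedes it below -/
import Mathlib

section
/- For every integer d ≥ 1 there exists a constant c ∈ (0,1), depending only on d, with the following property. Let w be a bounded solution of the supercooled parabolic obstacle problem on Q₂ = B₂ × (−4,4) with (0,0) a singular point whose blow-up profile is −t (i.e. (0,0) ∈ Σ_d), let δ ∈ (0, c/10) and r ∈ (0,1), and suppose |w(x,t) − (−t)| ≤ δ r² for all (x,t) ∈ Q_{2r}⁻ = B_{2r} × (−4r², 0]. Then B_r × [−r², −c^{−1}δ r²] ⊆ {w > 0} and B_r × [c^{−1}δ r², r²] ⊆ {w = 0}. -/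
open Set MeasureTheory Filter Metric Topology
open scoped ENNReal NNReal

noncomputable section

/-- `d`-dimensional Euclidean space. -/
abbrev EucSp (d : ℕ) : Type := EuclideanSpace ℝ (Fin d)

/-- Space-time `ℝ^d × ℝ`; a point is written `(x, t)`. -/
abbrev Pt (d : ℕ) : Type := EucSp d × ℝ

/-- The time derivative `∂ₜ w`. -/
noncomputable def timeDeriv {d : ℕ} (w : Pt d → ℝ) (p : Pt d) : ℝ :=
  deriv (fun s : ℝ => w (p.1, s)) p.2

/-- The second time derivative `∂ₜₜ w`. -/
noncomputable def timeDeriv2 {d : ℕ} (w : Pt d → ℝ) (p : Pt d) : ℝ :=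
  iteratedDeriv 2 (fun s : ℝ => w (p.1, s)) p.2

/-- Directional (spatial) derivative `∂ₑ w`. -/
noncomputable def dirDeriv {d : ℕ} (w : Pt d → ℝ) (e : EucSp d) (p : Pt d) : ℝ :=
  deriv (fun s : ℝ => w (p.1 + s • e, p.2)) 0

/-- Second directional (spatial) derivative `∂²w/∂e²`. -/
noncomputable def dirDeriv2 {d : ℕ} (w : Pt d → ℝ) (e : EucSp d) (p : Pt d) : ℝ :=
  iteratedDeriv 2 (fun s : ℝ => w (p.1 + s • e, p.2)) 0

/-- Spatial Laplacian `Δw`. -/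
noncomputable def spaceLap {d : ℕ} (w : Pt d → ℝ) (p : Pt d) : ℝ :=
  ∑ i : Fin d, dirDeriv2 w (EuclideanSpace.single i (1:ℝ)) p

/-- Norm of the spatial gradient `|∇w|`. -/
noncomputable def gradNorm {d : ℕ} (w : Pt d → ℝ) (p : Pt d) : ℝ :=
  Real.sqrt (∑ i : Fin d, (dirDeriv w (EuclideanSpace.single i (1:ℝ)) p) ^ 2)

/-- The positivity set `{w > 0}` (within the domain `D`). -/
def posSet {d : ℕ} (D : Set (Pt d)) (w : Pt d → ℝ) : Set (Pt d) :=
  {p | p ∈ D ∧ 0 < w p}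

/-- The free boundary `∂{w>0}`, relative to the domain `D`. -/
def freeBdry {d : ℕ} (D : Set (Pt d)) (w : Pt d → ℝ) : Set (Pt d) :=
  frontier (posSet D w) ∩ D

/-- The parabolic cylinder `Q_r = B_r × (−r², r²)`. -/
def parCyl (d : ℕ) (r : ℝ) : Set (Pt d) :=
  (Metric.ball (0 : EucSp d) r) ×ˢ (Ioo (-(r^2)) (r^2))

/-- A bounded solution of the supercooled parabolic obstacle problem on an open set `D`:
`w ≥ 0` is bounded and continuous, nonincreasing and strictly decreasing (while positive) in
time, smooth on `{w > 0}` where it solves `∂ₜ w − Δw = −1` classically, and it satisfies the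
distributional equation `∂ₜ w − Δw = −1_{{w>0}}`. -/
structure IsSupercooledSol (d : ℕ) (D : Set (Pt d)) (w : Pt d → ℝ) : Prop where
  bounded : ∃ M : ℝ, ∀ p ∈ D, |w p| ≤ M
  cont : ContinuousOn w D
  nonneg : ∀ p ∈ D, 0 ≤ w p
  mono : ∀ (x : EucSp d) (t₁ t₂ : ℝ), t₁ ≤ t₂ →
    (∀ t ∈ Icc t₁ t₂, ((x, t) : Pt d) ∈ D) → w (x, t₂) ≤ w (x, t₁)
  strict_decr : ∀ (x : EucSp d) (t₁ t₂ : ℝ), t₁ < t₂ → ((x, t₁) : Pt d) ∈ D →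
    ((x, t₂) : Pt d) ∈ D → 0 < w (x, t₁) → w (x, t₂) < w (x, t₁)
  smooth : ContDiffOn ℝ (⊤ : ℕ∞) w (posSet D w)
  pde : ∀ p ∈ posSet D w, timeDeriv w p - spaceLap w p = -1
  weak_eq : ∀ φ : Pt d → ℝ, ContDiff ℝ (⊤ : ℕ∞) φ → HasCompactSupport φ →
    tsupport φ ⊆ D →
    ∫ p in D, w p * (timeDeriv φ p + spaceLap φ p) = ∫ p in D, (posSet D w).indicator φ p

/-- The quadratic form `x ↦ ⟨Ax, x⟩`. -/
noncomputable def quadForm {d : ℕ} (A : Matrix (Fin d) (Fin d) ℝ) (x : EucSp d) : ℝ :=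
  ∑ i : Fin d, ∑ j : Fin d, A i j * x i * x j

/-- `(x₀,t₀)` is a singular free boundary point of `w` with blow-up profile
`p(x,t) = −mt + ½⟨Ax,x⟩`: the parabolic rescalings `r⁻² w(x₀+rx, t₀+r²t)` converge to `p`
uniformly on compact subsets of `ℝ^d × (−∞,0]` as `r ↓ 0`. -/
def IsSingularPt {d : ℕ} (D : Set (Pt d)) (w : Pt d → ℝ) (x₀ : EucSp d) (t₀ : ℝ)
    (m : ℝ) (A : Matrix (Fin d) (Fin d) ℝ) : Prop :=
  ((x₀, t₀) : Pt d) ∈ freeBdry D w ∧ 0 ≤ m ∧ m ≤ 1 ∧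
  A.IsSymm ∧ A.PosSemidef ∧ A.trace = 1 - m ∧
  ∀ R : ℝ, 0 < R → ∀ ε : ℝ, 0 < ε → ∃ r₀ : ℝ, 0 < r₀ ∧ ∀ r : ℝ, 0 < r → r < r₀ →
    ∀ (x : EucSp d) (t : ℝ), ‖x‖ ≤ R → -R ^ 2 ≤ t → t ≤ 0 →
      |(r ^ 2)⁻¹ * w (x₀ + r • x, t₀ + r ^ 2 * t) - (-(m * t) + (1/2) * quadForm A x)| ≤ ε

/-- The singular set `Σ` of `w`. -/
def singSet {d : ℕ} (D : Set (Pt d)) (w : Pt d → ℝ) : Set (Pt d) :=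
  {p : Pt d | ∃ m A, IsSingularPt D w p.1 p.2 m A}

/-- `(x₀,t₀)` is a regular free boundary point of `w`: along some sequence `r_k ↓ 0` the
parabolic rescalings converge to `½ max(x·e,0)²` uniformly on compact subsets. -/
def IsRegularPt {d : ℕ} (D : Set (Pt d)) (w : Pt d → ℝ) (x₀ : EucSp d) (t₀ : ℝ) : Prop :=
  ((x₀, t₀) : Pt d) ∈ freeBdry D w ∧
  ∃ e : EucSp d, ‖e‖ = 1 ∧ ∃ rs : ℕ → ℝ, (∀ k, 0 < rs k) ∧
    Tendsto rs atTop (nhds 0) ∧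
    ∀ R : ℝ, 0 < R → ∀ ε : ℝ, 0 < ε → ∃ N : ℕ, ∀ k, N ≤ k →
      ∀ (x : EucSp d) (t : ℝ), ‖x‖ ≤ R → -R ^ 2 ≤ t → t ≤ 0 →
        |(rs k ^ 2)⁻¹ * w (x₀ + rs k • x, t₀ + rs k ^ 2 * t) -
          (1/2) * (max (∑ i : Fin d, x i * e i) 0) ^ 2| ≤ ε

/-- Space–time, regarded with the parabolic metric
`d_par((x,t),(y,s)) = |x−y| + |t−s|^{1/2}`. -/
structure ParPt (d : ℕ) where
  x : EucSp d
  t : ℝ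

noncomputable instance {d : ℕ} : MetricSpace (ParPt d) where
  dist p q := dist p.x q.x + Real.sqrt (dist p.t q.t)
  dist_self p := by
    show dist p.x p.x + Real.sqrt (dist p.t p.t) = 0
    simp
  dist_comm p q := by
    show dist p.x q.x + Real.sqrt (dist p.t q.t) = dist q.x p.x + Real.sqrt (dist q.t p.t)
    rw [dist_comm, dist_comm p.t q.t]
  dist_triangle p q r := by
    show dist p.x r.x + Real.sqrt (dist p.t r.t) ≤
      (dist p.x q.x + Real.sqrt (dist p.t q.t)) + (dist q.x r.x + Real.sqrt (dist q.t r.t))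
    have h1 : dist p.x r.x ≤ dist p.x q.x + dist q.x r.x := dist_triangle _ _ _
    have ha : (0:ℝ) ≤ dist p.t q.t := dist_nonneg
    have hb : (0:ℝ) ≤ dist q.t r.t := dist_nonneg
    have h2 : Real.sqrt (dist p.t r.t) ≤ Real.sqrt (dist p.t q.t) + Real.sqrt (dist q.t r.t) := by
      have h3 : Real.sqrt (dist p.t r.t) ≤ Real.sqrt (dist p.t q.t + dist q.t r.t) :=
        Real.sqrt_le_sqrt (dist_triangle _ _ _)
      have e1 : Real.sqrt (dist p.t q.t) ^ 2 = dist p.t q.t := Real.sq_sqrt ha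
      have e2 : Real.sqrt (dist q.t r.t) ^ 2 = dist q.t r.t := Real.sq_sqrt hb
      have h5 : Real.sqrt (dist p.t q.t + dist q.t r.t) ≤
          Real.sqrt ((Real.sqrt (dist p.t q.t) + Real.sqrt (dist q.t r.t)) ^ 2) := by
        apply Real.sqrt_le_sqrt
        nlinarith [Real.sqrt_nonneg (dist p.t q.t), Real.sqrt_nonneg (dist q.t r.t)]
      have h6 : Real.sqrt ((Real.sqrt (dist p.t q.t) + Real.sqrt (dist q.t r.t)) ^ 2) =
          Real.sqrt (dist p.t q.t) + Real.sqrt (dist q.t r.t) :=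
        Real.sqrt_sq (by positivity)
      linarith [h5.trans_eq h6]
    linarith
  eq_of_dist_eq_zero := by
    intro p q h
    have h' : dist p.x q.x + Real.sqrt (dist p.t q.t) = 0 := h
    have ha : (0:ℝ) ≤ dist p.x q.x := dist_nonneg
    have hb : (0:ℝ) ≤ Real.sqrt (dist p.t q.t) := Real.sqrt_nonneg _
    have hx : dist p.x q.x = 0 := by linarith
    have ht0 : Real.sqrt (dist p.t q.t) = 0 := by linarith
    have ht : dist p.t q.t = 0 := by
      by_contra hc
      have hpos : 0 < dist p.t q.t := lt_of_le_of_ne dist_nonneg (Ne.symm hc)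
      have := Real.sqrt_pos.mpr hpos
      linarith
    have hx' : p.x = q.x := by rwa [dist_eq_zero] at hx
    have ht' : p.t = q.t := by rwa [dist_eq_zero] at ht
    cases p; cases q
    simp_all

/-- The tautological identification of space-time with parabolic space-time. -/
def toParPt {d : ℕ} (p : Pt d) : ParPt d := ⟨p.1, p.2⟩

/-- The parabolic Hausdorff dimension of a set in space-time: the Hausdorff dimension
computed with respect to the parabolic metric. -/
noncomputable def dimPar {d : ℕ} (E : Set (Pt d)) : ℝ≥0∞ := dimH (toParPt '' E)

end



section Helpers
open Set Filter Metric Topology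

lemma deriv_nonpos_of_right_endpoint_min {g : ℝ → ℝ} {a t₀ t₁ : ℝ}
    (h : HasDerivAt g a t₁) (ht : t₀ < t₁)
    (hmin : ∀ t ∈ Icc t₀ t₁, g t₁ ≤ g t) : a ≤ 0 := by
  have hs := hasDerivAt_iff_tendsto_slope.mp h
  have hs' : Tendsto (slope g t₁) (𝓝[<] t₁) (𝓝 a) :=
    hs.mono_left (nhdsWithin_mono _ (fun x hx => ne_of_lt hx))
  have hev : ∀ᶠ t in 𝓝[<] t₁, slope g t₁ t ≤ 0 := by
    filter_upwards [Ioo_mem_nhdsLT_of_mem ⟨ht, le_refl t₁⟩] with t htI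
    have h1 : g t₁ ≤ g t := hmin t ⟨le_of_lt htI.1, le_of_lt htI.2⟩
    have h2 : t - t₁ < 0 := by linarith [htI.2]
    rw [slope_def_field]
    exact div_nonpos_of_nonneg_of_nonpos (by linarith) (by linarith)
  exact le_of_tendsto hs' hev

lemma second_deriv_test {u : ℝ → ℝ} {U : Set ℝ} (hUo : IsOpen U) (hU0 : (0:ℝ) ∈ U)
    (hCU : ContDiffOn ℝ (⊤ : ℕ∞) u U) (hmin : IsLocalMin u 0) :
    0 ≤ iteratedDeriv 2 u 0 := by
  have hCU' : ContDiffOn ℝ (⊤ : ℕ∞) (deriv u) U :=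
    hCU.deriv_of_isOpen hUo (le_of_eq (by rfl))
  have hd2 : HasDerivAt (deriv u) (iteratedDeriv 2 u 0) 0 := by
    have hda : DifferentiableAt ℝ (deriv u) 0 :=
      (hCU'.differentiableOn (by simp)).differentiableAt (hUo.mem_nhds hU0)
    have h2 : iteratedDeriv 2 u 0 = deriv (deriv u) 0 := by
      rw [iteratedDeriv_succ, iteratedDeriv_one]
    rw [h2]; exact hda.hasDerivAt
  by_contra hneg
  push_neg at hneg
  set a := iteratedDeriv 2 u 0 with ha
  have hu'0 : deriv u 0 = 0 := hmin.deriv_eq_zero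
  have hs2 := hasDerivAt_iff_tendsto_slope.mp hd2
  have hslt : ∀ᶠ σ in 𝓝[>] (0:ℝ), slope (deriv u) 0 σ < a/2 := by
    have h1 : ∀ᶠ x in 𝓝 a, x < a/2 := gt_mem_nhds (by linarith)
    have h2 := hs2.eventually h1
    exact h2.filter_mono (nhdsWithin_mono _
      (fun x hx => mem_compl_singleton_iff.mpr (ne_of_gt hx)))
  obtain ⟨h₁, hh₁, hIoo₁⟩ := mem_nhdsGT_iff_exists_Ioo_subset.mp hslt
  obtain ⟨ε₂, hε₂, hball₂⟩ := Metric.mem_nhds_iff.mp hmin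
  obtain ⟨ε₃, hε₃, hball₃⟩ := Metric.mem_nhds_iff.mp (hUo.mem_nhds hU0)
  set σ0 : ℝ := min (min (h₁/2) (ε₂/2)) (ε₃/2) with hσ0
  have hσ0pos : 0 < σ0 := by
    simp only [hσ0, lt_min_iff]
    exact ⟨⟨by simpa using half_pos (show (0:ℝ) < h₁ from hh₁),
      half_pos hε₂⟩, half_pos hε₃⟩
  have hIccU : Icc (0:ℝ) σ0 ⊆ U := by
    intro x hx
    apply hball₃
    have hax : |x| < ε₃ := by
      rw [abs_of_nonneg hx.1]
      calc x ≤ σ0 := hx.2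
        _ ≤ ε₃/2 := min_le_right _ _
        _ < ε₃ := by linarith
    simpa [Real.dist_eq] using hax
  have hderivneg : ∀ τ ∈ Ioo (0:ℝ) σ0, deriv u τ < 0 := by
    intro τ hτ
    have hτh : τ ∈ Ioo 0 h₁ := ⟨hτ.1, lt_of_lt_of_le hτ.2 (by
      calc σ0 ≤ h₁/2 := le_trans (min_le_left _ _) (min_le_left _ _)
        _ ≤ h₁ := by linarith [show (0:ℝ) < h₁ from hh₁])⟩
    have h5 : slope (deriv u) 0 τ < a/2 := hIoo₁ hτh
    rw [slope_def_field, hu'0, sub_zero, sub_zero] at h5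
    have h6 : deriv u τ < a/2 * τ := by
      rw [div_lt_iff₀ hτ.1] at h5; linarith
    nlinarith [hτ.1]
  have hanti : StrictAntiOn u (Icc (0:ℝ) σ0) := by
    apply strictAntiOn_of_deriv_neg (convex_Icc _ _)
    · exact (hCU.continuousOn).mono hIccU
    · intro x hx
      rw [interior_Icc] at hx
      exact hderivneg x hx
  have hlt : u σ0 < u 0 :=
    hanti ⟨le_refl 0, le_of_lt hσ0pos⟩ ⟨le_of_lt hσ0pos, le_refl σ0⟩ hσ0pos
  have hge : u 0 ≤ u σ0 := by
    apply hball₂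
    have haσ : |σ0| < ε₂ := by
      rw [abs_of_pos hσ0pos]
      calc σ0 ≤ ε₂/2 := le_trans (min_le_left _ _) (min_le_right _ _)
        _ < ε₂ := by linarith
    simpa [Real.dist_eq] using haσ
  linarith

lemma posSet_isOpen {d : ℕ} {D : Set (Pt d)} {w : Pt d → ℝ} (hD : IsOpen D)
    (hw : ContinuousOn w D) : IsOpen (posSet D w) := by
  have h : posSet D w = D ∩ w ⁻¹' Ioi 0 := by
    ext p
    simp only [posSet, Set.mem_setOf_eq, Set.mem_inter_iff, Set.mem_preimage, Set.mem_Ioi]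
  rw [h]; exact hw.isOpen_inter_preimage hD isOpen_Ioi

lemma parCyl_isOpen (d : ℕ) (r : ℝ) : IsOpen (parCyl d r) :=
  (Metric.isOpen_ball).prod isOpen_Ioo

lemma iteratedDeriv_two_sub {P W : ℝ → ℝ} {b c : ℝ} {V : Set ℝ}
    (hVo : IsOpen V) (hV0 : (0:ℝ) ∈ V) (hCV : ContDiffOn ℝ (⊤ : ℕ∞) W V)
    (hP : ∀ σ : ℝ, HasDerivAt P (b + c * σ) σ) :
    iteratedDeriv 2 (fun σ => P σ - W σ) 0 = c - iteratedDeriv 2 W 0 := by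
  have hCV' : ContDiffOn ℝ (⊤ : ℕ∞) (deriv W) V :=
    hCV.deriv_of_isOpen hVo (le_of_eq (by rfl))
  have hWd : ∀ σ ∈ V, DifferentiableAt ℝ W σ := fun σ hσ =>
    (hCV.differentiableOn (by simp)).differentiableAt (hVo.mem_nhds hσ)
  have hEq : deriv (fun σ => P σ - W σ) =ᶠ[𝓝 0] fun σ => (b + c * σ) - deriv W σ := by
    filter_upwards [hVo.mem_nhds hV0] with σ hσ
    rw [deriv_fun_sub (hP σ).differentiableAt (hWd σ hσ), (hP σ).deriv]
  have hlin : HasDerivAt (fun σ : ℝ => b + c * σ) c 0 := by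
    simpa using ((hasDerivAt_id (0:ℝ)).const_mul c).const_add b
  have hWd2 : DifferentiableAt ℝ (deriv W) 0 :=
    (hCV'.differentiableOn (by simp)).differentiableAt (hVo.mem_nhds hV0)
  have h2 : iteratedDeriv 2 (fun σ => P σ - W σ) 0
      = deriv (deriv (fun σ => P σ - W σ)) 0 := by
    rw [iteratedDeriv_succ, iteratedDeriv_one]
  rw [h2, hEq.deriv_eq, deriv_fun_sub hlin.differentiableAt hWd2, hlin.deriv,
    iteratedDeriv_succ, iteratedDeriv_one]

lemma cleaning_step {d : ℕ} {w : Pt d → ℝ} (sol : IsSupercooledSol d (parCyl d 2) w)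
    {xb : EucSp d} {s ε t₀ lam : ℝ} (hs : 0 < s) (hε : 0 < ε)
    (hlam : lam = 1 - 2 * (d : ℝ) * (ε / s ^ 2)) (hlampos : 0 < lam)
    (hD : ∀ x : EucSp d, dist x xb ≤ s → ∀ t ∈ Icc t₀ (t₀ + ε / lam),
      ((x, t) : Pt d) ∈ parCyl d 2)
    (hbase : ∀ x : EucSp d, dist x xb ≤ s → w (x, t₀) ≤ ε) :
    ∀ x : EucSp d, dist x xb ≤ s →
      w (x, t₀ + ε / lam) ≤ ε / s ^ 2 * dist x xb ^ 2 := by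
  have hs0 : s ≠ 0 := ne_of_gt hs
  have hlam0 : lam ≠ 0 := ne_of_gt hlampos
  set τ : ℝ := ε / lam with hτdef
  set q : ℝ := ε / s ^ 2 with hqdef
  have hτpos : 0 < τ := div_pos hε hlampos
  have hqpos : 0 < q := div_pos hε (by positivity)
  have hlamτ : lam * τ = ε := by rw [hτdef]; field_simp
  have hqs : q * s ^ 2 = ε := by rw [hqdef]; field_simp
  set C : Set (Pt d) := (closedBall xb s) ×ˢ (Icc t₀ (t₀ + τ)) with hC
  have hmemC : ∀ (x : EucSp d) (t : ℝ), dist x xb ≤ s → t ∈ Icc t₀ (t₀ + τ) →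
      ((x, t) : Pt d) ∈ C := by
    intro x t hx ht
    rw [hC, Set.mem_prod]
    exact ⟨Metric.mem_closedBall.mpr hx, ht⟩
  have hCD : ∀ p ∈ C, p ∈ parCyl d 2 := by
    rintro ⟨x, t⟩ hp
    rw [hC, Set.mem_prod] at hp
    exact hD x (Metric.mem_closedBall.mp hp.1) t hp.2
  have hwle : ∀ p ∈ C, w p ≤ ε := by
    rintro ⟨x, t⟩ hp
    rw [hC, Set.mem_prod] at hp
    have hmx : dist x xb ≤ s := Metric.mem_closedBall.mp hp.1
    have h1 : w (x, t) ≤ w (x, t₀) :=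
      sol.mono x t₀ t hp.2.1 (fun t' ht' => hD x hmx t' ⟨ht'.1, le_trans ht'.2 hp.2.2⟩)
    exact le_trans h1 (hbase x hmx)
  set Φ : Pt d → ℝ := fun p => ε + q * dist p.1 xb ^ 2 - lam * (p.2 - t₀) with hΦ
  have hΦeq : ∀ (x : EucSp d) (t : ℝ), Φ (x, t) = ε + q * dist x xb ^ 2 - lam * (t - t₀) :=
    fun _ _ => rfl
  have hΦnn : ∀ p ∈ C, 0 ≤ Φ p := by
    rintro ⟨x, t⟩ hp
    rw [hC, Set.mem_prod] at hp
    have h1 : lam * (t - t₀) ≤ lam * τ :=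
      mul_le_mul_of_nonneg_left (by linarith [hp.2.2]) (le_of_lt hlampos)
    rw [hlamτ] at h1
    have h2 : 0 ≤ q * dist x xb ^ 2 := by positivity
    rw [hΦeq]; linarith
  have key : ∀ γ : ℝ, 0 < γ → ∀ p ∈ C, 0 ≤ Φ p + γ * (p.2 - t₀) - w p := by
    intro γ hγ
    by_contra hcon
    push_neg at hcon
    obtain ⟨p₀, hp₀C, hp₀neg⟩ := hcon
    set F : Pt d → ℝ := fun p => Φ p + γ * (p.2 - t₀) - w p with hF
    have hFeq : ∀ (x : EucSp d) (t : ℝ),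
        F (x, t) = Φ (x, t) + γ * (t - t₀) - w (x, t) := fun _ _ => rfl
    have hFcont : ContinuousOn F C := by
      apply ContinuousOn.sub
      · apply Continuous.continuousOn
        apply Continuous.add
        · apply Continuous.sub
          · exact continuous_const.add
              (continuous_const.mul ((continuous_fst.dist continuous_const).pow 2))
          · exact continuous_const.mul (continuous_snd.sub continuous_const)
        · exact continuous_const.mul (continuous_snd.sub continuous_const)
      · exact sol.cont.mono hCD
    have hCcomp : IsCompact C := (isCompact_closedBall _ _).prod isCompact_Icc
    have hCne : C.Nonempty := ⟨(xb, t₀), hmemC xb t₀ (by simp [le_of_lt hs])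
      ⟨le_refl _, by linarith⟩⟩
    obtain ⟨pm, hpmC, hpmin⟩ := hCcomp.exists_isMinOn hCne hFcont
    have hFneg : F pm < 0 := lt_of_le_of_lt (hpmin hp₀C) hp₀neg
    have hpmC' := hpmC
    rw [hC, Set.mem_prod] at hpmC'
    have hxm : dist pm.1 xb ≤ s := Metric.mem_closedBall.mp hpmC'.1
    have htm : pm.2 ∈ Icc t₀ (t₀ + τ) := hpmC'.2
    have hγt : 0 ≤ γ * (pm.2 - t₀) := mul_nonneg (le_of_lt hγ) (by linarith [htm.1])
    have hFpm : F pm = Φ pm + γ * (pm.2 - t₀) - w pm := rfl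
    have hwpos : 0 < w pm := by
      have h0 := hΦnn pm hpmC
      rw [hFpm] at hFneg
      linarith
    have hppos : pm ∈ posSet (parCyl d 2) w := ⟨hCD pm hpmC, hwpos⟩
    have hopen : IsOpen (posSet (parCyl d 2) w) :=
      posSet_isOpen (parCyl_isOpen d 2) sol.cont
    -- rule out the bottom
    have ht₀lt : t₀ < pm.2 := by
      rcases lt_or_eq_of_le htm.1 with h | h
      · exact h
      · exfalso
        have hwb : w pm ≤ ε := hwle pm hpmC
        have hfe : F pm = ε + q * dist pm.1 xb ^ 2 - lam * (pm.2 - t₀)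
            + γ * (pm.2 - t₀) - w pm := by
          rw [hFpm, hΦ]
        rw [hfe, ← h] at hFneg
        nlinarith [sq_nonneg (dist pm.1 xb)]
    -- rule out the lateral boundary
    have hxlt : dist pm.1 xb < s := by
      rcases lt_or_eq_of_le hxm with h | h
      · exact h
      · exfalso
        have h1 : Φ pm = ε + ε - lam * (pm.2 - t₀) := by
          rw [hΦ]; simp only []; rw [h, hqs]
        have h2 : lam * (pm.2 - t₀) ≤ ε := by
          rw [← hlamτ]
          exact mul_le_mul_of_nonneg_left (by linarith [htm.2]) (le_of_lt hlampos)
        have h3 : w pm ≤ ε := hwle pm hpmC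
        rw [hFpm, h1] at hFneg
        linarith
    -- time derivative at the minimum point
    have hLt : ContDiff ℝ (⊤ : ℕ∞) (fun t : ℝ => ((pm.1, t) : Pt d)) :=
      contDiff_const.prodMk contDiff_id
    have hgd : DifferentiableAt ℝ (fun t : ℝ => w (pm.1, t)) pm.2 := by
      have hWC : ContDiffOn ℝ (⊤ : ℕ∞) (fun t : ℝ => w (pm.1, t))
          ((fun t : ℝ => ((pm.1, t) : Pt d)) ⁻¹' (posSet (parCyl d 2) w)) :=
        sol.smooth.comp hLt.contDiffOn (fun σ hσ => hσ)
      have hVo : IsOpen ((fun t : ℝ => ((pm.1, t) : Pt d)) ⁻¹' (posSet (parCyl d 2) w)) :=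
        hopen.preimage hLt.continuous
      have hV0 : pm.2 ∈ (fun t : ℝ => ((pm.1, t) : Pt d)) ⁻¹' (posSet (parCyl d 2) w) := by
        simp only [Set.mem_preimage]; exact hppos
      exact (hWC.differentiableOn (by simp)).differentiableAt (hVo.mem_nhds hV0)
    have htd : HasDerivAt (fun t : ℝ => w (pm.1, t)) (timeDeriv w pm) pm.2 := hgd.hasDerivAt
    set G : ℝ → ℝ := fun t => (ε + q * dist pm.1 xb ^ 2 - lam * (t - t₀) + γ * (t - t₀))
      - w (pm.1, t) with hG
    have hGd : HasDerivAt G (0 - lam * 1 + γ * 1 - timeDeriv w pm) pm.2 := by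
      apply HasDerivAt.sub _ htd
      have h1 : HasDerivAt (fun t : ℝ => t - t₀) 1 pm.2 := (hasDerivAt_id _).sub_const _
      exact (((hasDerivAt_const pm.2 (ε + q * dist pm.1 xb ^ 2)).sub
        (h1.const_mul lam)).add (h1.const_mul γ))
    have hGmin : ∀ t ∈ Icc t₀ pm.2, G pm.2 ≤ G t := by
      intro t ht
      have hmem : ((pm.1, t) : Pt d) ∈ C :=
        hmemC pm.1 t hxm ⟨ht.1, le_trans ht.2 htm.2⟩
      have h1 : F pm ≤ F (pm.1, t) := hpmin hmem
      have h2 : G t = F (pm.1, t) := rfl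
      have h3 : G pm.2 = F pm := rfl
      rw [h2, h3]; exact h1
    have htime : 0 - lam * 1 + γ * 1 - timeDeriv w pm ≤ 0 :=
      deriv_nonpos_of_right_endpoint_min hGd ht₀lt hGmin
    -- spatial second derivatives at the minimum point
    have hspace : ∀ i : Fin d, dirDeriv2 w (EuclideanSpace.single i (1:ℝ)) pm ≤ 2 * q := by
      intro i
      set e : EucSp d := EuclideanSpace.single i (1:ℝ) with he
      have hne : ‖e‖ = 1 := by simp [he]
      set B : ℝ := inner ℝ (pm.1 - xb) e with hB
      have hexp : ∀ σ : ℝ, dist (pm.1 + σ • e) xb ^ 2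
          = dist pm.1 xb ^ 2 + 2 * B * σ + σ ^ 2 := by
        intro σ
        have h1 : pm.1 + σ • e - xb = (pm.1 - xb) + σ • e := by abel
        rw [dist_eq_norm, dist_eq_norm, h1, norm_add_sq_real, real_inner_smul_right,
          norm_smul, hne]
        simp only [Real.norm_eq_abs, mul_one, mul_pow, sq_abs, one_pow]
        ring
      set L : ℝ → Pt d := fun σ => ((pm.1 + σ • e, pm.2) : Pt d) with hL
      have hLC : ContDiff ℝ (⊤ : ℕ∞) L :=
        (contDiff_const.add (contDiff_id.smul contDiff_const)).prodMk contDiff_const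
      set W : ℝ → ℝ := fun σ => w (pm.1 + σ • e, pm.2) with hW
      have hL0 : L 0 = pm := by
        rw [hL]; simp
      set V : Set ℝ := L ⁻¹' (posSet (parCyl d 2) w) with hV
      have hVo : IsOpen V := hopen.preimage hLC.continuous
      have hV0 : (0:ℝ) ∈ V := by
        rw [hV]; simp only [Set.mem_preimage, hL0]; exact hppos
      have hWC : ContDiffOn ℝ (⊤ : ℕ∞) W V := sol.smooth.comp hLC.contDiffOn
        (fun σ hσ => hσ)
      set P : ℝ → ℝ := fun σ =>
        ε + q * (dist pm.1 xb ^ 2 + 2 * B * σ + σ ^ 2) - lam * (pm.2 - t₀)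
          + γ * (pm.2 - t₀) with hP
      have hueq : ∀ σ : ℝ, F (pm.1 + σ • e, pm.2) = P σ - W σ := by
        intro σ
        have h0 : F (pm.1 + σ • e, pm.2)
            = ε + q * dist (pm.1 + σ • e) xb ^ 2 - lam * (pm.2 - t₀)
              + γ * (pm.2 - t₀) - w (pm.1 + σ • e, pm.2) := rfl
        rw [h0, hexp σ]
      have hPd : ∀ σ : ℝ, HasDerivAt P (2 * q * B + 2 * q * σ) σ := by
        intro σ
        have h3 : HasDerivAt (fun x : ℝ => x ^ 2) (2 * σ) σ := by
          simpa using hasDerivAt_pow 2 σ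
        have h2 : HasDerivAt (fun x : ℝ => dist pm.1 xb ^ 2 + 2 * B * x + x ^ 2)
            (2 * B + 2 * σ) σ := by
          have h4 := (((hasDerivAt_id σ).const_mul (2*B)).const_add
            (dist pm.1 xb ^ 2)).fun_add h3
          simpa using h4
        have h1 := (((h2.const_mul q).const_add ε).sub_const
          (lam * (pm.2 - t₀))).add_const (γ * (pm.2 - t₀))
        convert h1 using 1
        · rfl
        · rfl
        ring
      have hmin0 : IsLocalMin (fun σ => P σ - W σ) 0 := by
        have hcont : Continuous (fun σ : ℝ => dist (pm.1 + σ • e) xb) :=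
          (continuous_const.add (continuous_id.smul continuous_const)).dist
            continuous_const
        have h0lt : dist (pm.1 + (0:ℝ) • e) xb < s := by
          simpa using hxlt
        have hev : ∀ᶠ σ : ℝ in 𝓝 0, dist (pm.1 + σ • e) xb < s :=
          (hcont.continuousAt).eventually_lt continuousAt_const h0lt
        have hu0 : (fun σ => P σ - W σ) 0 = F pm := by
          show P 0 - W 0 = F pm
          rw [← hueq 0]
          have : ((pm.1 + (0:ℝ) • e, pm.2) : Pt d) = pm := by simp
          rw [this]
        filter_upwards [hev] with σ hσ
        have hmem : ((pm.1 + σ • e, pm.2) : Pt d) ∈ C :=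
          hmemC _ _ (le_of_lt hσ) htm
        have h1 : F pm ≤ F (pm.1 + σ • e, pm.2) := hpmin hmem
        rw [← hueq σ] at *
        simpa [hu0] using h1
      have hPC : ContDiff ℝ (⊤ : ℕ∞) P := by
        rw [hP]; fun_prop
      have hPWC : ContDiffOn ℝ (⊤ : ℕ∞) (fun σ => P σ - W σ) V :=
        (hPC.contDiffOn).sub hWC
      have h2d : 0 ≤ iteratedDeriv 2 (fun σ => P σ - W σ) 0 :=
        second_deriv_test hVo hV0 hPWC hmin0
      have hcd2 : iteratedDeriv 2 (fun σ => P σ - W σ) 0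
          = 2 * q - iteratedDeriv 2 W 0 := by
        exact iteratedDeriv_two_sub hVo hV0 hWC hPd
      have hdir : dirDeriv2 w e pm = iteratedDeriv 2 W 0 := rfl
      rw [hdir]
      rw [hcd2] at h2d
      linarith
    -- combine with the PDE
    have hsum : spaceLap w pm ≤ 2 * (d:ℝ) * q := by
      have h1 : spaceLap w pm ≤ ∑ _i : Fin d, 2 * q :=
        Finset.sum_le_sum (fun i _ => hspace i)
      have h2 : (∑ _i : Fin d, 2 * q) = (d:ℝ) * (2 * q) := by
        rw [Finset.sum_const, Finset.card_univ, Fintype.card_fin, nsmul_eq_mul]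
      rw [h2] at h1
      linarith
    have hpde := sol.pde pm hppos
    have htd2 : γ - lam ≤ timeDeriv w pm := by linarith [htime]
    linarith [hpde, hsum, hlam, hγ, htd2]
  -- conclude from the key claim
  intro x hx
  have hmem : ((x, t₀ + τ) : Pt d) ∈ C := hmemC x (t₀ + τ) hx ⟨by linarith, le_refl _⟩
  have hΦv : Φ (x, t₀ + τ) = q * dist x xb ^ 2 := by
    rw [hΦeq]
    have h5 : lam * (t₀ + τ - t₀) = ε := by
      rw [← hlamτ]; ring
    rw [h5]; ring
  have hle : ∀ η : ℝ, 0 < η → w (x, t₀ + τ) ≤ q * dist x xb ^ 2 + η := by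
    intro η hη
    have hγ : 0 < η / τ := div_pos hη hτpos
    have hk : 0 ≤ Φ (x, t₀ + τ) + η / τ * ((t₀ + τ) - t₀) - w (x, t₀ + τ) :=
      key (η/τ) hγ _ hmem
    have h6 : η / τ * ((t₀ + τ) - t₀) = η := by
      field_simp
      ring
    rw [hΦv, h6] at hk
    linarith
  by_contra hcon
  push_neg at hcon
  have h7 := hle ((w (x, t₀ + τ) - q * dist x xb ^ 2)/2) (by linarith)
  linarith

end Helpers

set_option maxHeartbeats 1000000
/-- Two-sided superquadratic cleaning in the top stratum: there is a
dimensional constant `c ∈ (0,1)` such that if `(0,0)` is a singular point with blow-up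
profile `−t` and `|w − (−t)| ≤ δr²` on `Q_{2r}⁻ = B_{2r} × (−4r², 0]` for some
`δ ∈ (0, c/10)`, `r ∈ (0,1)`, then `B_r × [−r², −c⁻¹δr²] ⊆ {w > 0}` and
`B_r × [c⁻¹δr², r²] ⊆ {w = 0}`. -/
theorem supercooled_two_sided_cleaning (d : ℕ) (hd : 1 ≤ d) :
    ∃ c : ℝ, 0 < c ∧ c < 1 ∧
      ∀ w : Pt d → ℝ, IsSupercooledSol d (parCyl d 2) w →
        IsSingularPt (parCyl d 2) w 0 0 1 0 →
        ∀ δ : ℝ, 0 < δ → δ < c/10 → ∀ r : ℝ, 0 < r → r < 1 →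
          (∀ p : Pt d, ‖p.1‖ < 2*r → -(2*r)^2 < p.2 → p.2 ≤ 0 →
            |w p - (-p.2)| ≤ δ * r^2) →
          (∀ p : Pt d, ‖p.1‖ < r → p.2 ∈ Icc (-(r^2)) (-(c⁻¹ * δ * r^2)) →
            p ∈ posSet (parCyl d 2) w) ∧
          (∀ p : Pt d, ‖p.1‖ < r → p.2 ∈ Icc (c⁻¹ * δ * r^2) (r^2) → w p = 0) := by
  refine ⟨(4 * (d:ℝ))⁻¹, ?_, ?_, ?_⟩
  · have : (1:ℝ) ≤ d := by exact_mod_cast hd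
    positivity
  · have h1 : (1:ℝ) ≤ d := by exact_mod_cast hd
    rw [inv_lt_one_iff₀]
    right; linarith
  intro w sol _hsing δ hδ hδc r hr hr1 happrox
  have hd1 : (1:ℝ) ≤ d := by exact_mod_cast hd
  have hcinv : ((4 * (d:ℝ))⁻¹)⁻¹ = 4 * d := inv_inv _
  have hδ' : δ < 1 / (40 * d) := by
    rw [lt_div_iff₀ (by positivity)] at hδc ⊢
    calc δ * (40 * (d:ℝ)) = δ * 10 * (4 * d) := by ring
      _ < (4 * (d:ℝ))⁻¹ * (4 * d) := by
          apply mul_lt_mul_of_pos_right _ (by positivity)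
          linarith
      _ = 1 := by field_simp
  have hδ'' : δ * (40 * (d:ℝ)) < 1 := by
    rw [lt_div_iff₀ (by positivity)] at hδ'
    exact hδ'
  have hδd : 2 * (d:ℝ) * δ < 1/20 := by nlinarith [hδ'', hd1, hδ]
  have hδ40 : δ < 1/40 := by nlinarith [hδ'', hd1, hδ]
  set lam : ℝ := 1 - 2 * (d:ℝ) * δ with hlamdef
  have hlampos : (19:ℝ)/20 < lam := by rw [hlamdef]; linarith
  have hlampos' : 0 < lam := by linarith
  have hmemD : ∀ (x : EucSp d) (t : ℝ), ‖x‖ < 2*r → -4 < t → t < 4 →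
      ((x, t) : Pt d) ∈ parCyl d 2 := by
    intro x t hx h1 h2
    rw [parCyl, Set.mem_prod]
    constructor
    · rw [mem_ball_zero_iff]; linarith
    · constructor
      · norm_num; linarith
      · norm_num; linarith
  constructor
  · -- positivity region
    rintro ⟨x, t⟩ hx ht
    rw [hcinv] at ht
    have h4 : (0:ℝ) < 4 * d * δ * r^2 := by positivity
    have ht0 : t < 0 := by
      have := ht.2; nlinarith [this]
    have hap := happrox (x, t) (by simp only []; linarith) (by
      simp only []
      have : -(2*r)^2 = -(4*r^2) := by ring
      rw [this]; nlinarith [ht.1]) (le_of_lt ht0)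
    simp only [] at hap
    have hap' := abs_le.mp hap
    have hwt : -t - δ * r^2 ≤ w (x, t) := by linarith [hap'.1]
    have htle : t ≤ -(4 * ↑d * δ * r^2) := by
      have := ht.2; linarith [this]
    have hwpos : 0 < w (x, t) := by nlinarith
    refine ⟨hmemD x t (by linarith) (by nlinarith [ht.1]) (by linarith), hwpos⟩
  · -- cleaning region
    rintro ⟨xb, t⟩ hxb ht
    rw [hcinv] at ht
    simp only [] at hxb ht ⊢
    -- iteration data
    set sn : ℕ → ℝ := fun n => r / (Real.sqrt 2)^n with hsn
    set en : ℕ → ℝ := fun n => δ * r^2 / 2^n with hen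
    set Tn : ℕ → ℝ := fun n => (2 - 2*(1/2 : ℝ)^n) * (δ * r^2 / lam) with hTn
    have hsqrt2 : (1:ℝ) ≤ Real.sqrt 2 := by
      rw [show (1:ℝ) = Real.sqrt 1 by simp]
      exact Real.sqrt_le_sqrt (by norm_num)
    have hsnpos : ∀ n, 0 < sn n := fun n => div_pos hr (pow_pos (by linarith) n)
    have hsnler : ∀ n, sn n ≤ r := fun n => by
      rw [hsn]
      exact div_le_self (le_of_lt hr) (one_le_pow₀ hsqrt2)
    have hsq : ∀ n, sn n ^ 2 = r^2 / 2^n := by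
      intro n
      rw [hsn]
      simp only [div_pow]
      congr 1
      rw [← pow_mul, mul_comm n 2, pow_mul, Real.sq_sqrt (by norm_num)]
    have henpos : ∀ n, 0 < en n := fun n => by
      rw [hen]; positivity
    have hqn : ∀ n, en n / sn n ^ 2 = δ := by
      intro n
      rw [hsq, hen]
      field_simp
    have hTnn : ∀ n, 0 ≤ Tn n := by
      intro n
      rw [hTn]
      apply mul_nonneg _ (by positivity)
      have : (1/2:ℝ)^n ≤ 1 := pow_le_one₀ (by norm_num) (by norm_num)
      linarith
    have hTinf : ∀ n, Tn n ≤ 2 * (δ * r^2 / lam) := by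
      intro n
      rw [hTn]
      apply mul_le_mul_of_nonneg_right _ (by positivity)
      have : (0:ℝ) ≤ (1/2:ℝ)^n := by positivity
      linarith
    have hr2 : r^2 < 1 := pow_lt_one₀ (le_of_lt hr) hr1 (by norm_num)
    have h8 : δ * r^2 < 1/40 := by
      have h9 : δ * r^2 ≤ δ := mul_le_of_le_one_right (le_of_lt hδ) (le_of_lt hr2)
      linarith [hδ40]
    have hTsmall : 2 * (δ * r^2 / lam) < 1 := by
      rw [show 2 * (δ * r^2 / lam) = (2 * (δ * r^2))/lam by ring,
        div_lt_one hlampos']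
      linarith [h8, hlampos]
    have hTstep : ∀ n, Tn n + en n / lam = Tn (n+1) := by
      intro n
      simp only [hTn, hen]
      have h12 : (1/2:ℝ)^n = 1/2^n := by rw [div_pow, one_pow]
      have h12' : (1/2:ℝ)^(n+1) = 1/2^(n+1) := by rw [div_pow, one_pow]
      rw [h12, h12']
      have hpow : (2:ℝ)^(n+1) = 2 * 2^n := by ring
      rw [hpow]
      have h2n : ((2:ℝ))^n ≠ 0 := by positivity
      field_simp
      ring
    -- the induction
    have hiter : ∀ n, ∀ x : EucSp d, dist x xb ≤ sn n → w (x, Tn n) ≤ en n := by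
      intro n
      induction n with
      | zero =>
        intro x hxd
        have hT0 : Tn 0 = 0 := by rw [hTn]; norm_num
        have hs0 : sn 0 = r := by rw [hsn]; norm_num
        have he0 : en 0 = δ * r^2 := by rw [hen]; norm_num
        rw [hT0, he0]
        rw [hs0] at hxd
        have hnx : ‖x‖ < 2 * r := by
          have h1 : ‖x‖ ≤ dist x xb + ‖xb‖ := by
            rw [← dist_zero_right x, ← dist_zero_right xb]
            exact dist_triangle x xb 0
          linarith
        have hap := happrox (x, 0) (by simp only []; exact hnx)
          (by show -(2*r)^2 < (0:ℝ); nlinarith [hr]) (le_refl 0)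
        simp only [neg_zero, sub_zero] at hap
        linarith [abs_le.mp hap |>.2]
      | succ n ih =>
        intro x hxd
        have hlamn : lam = 1 - 2 * (d:ℝ) * (en n / sn n ^ 2) := by
          rw [hqn n, hlamdef]
        have hDn : ∀ y : EucSp d, dist y xb ≤ sn n →
            ∀ t' ∈ Icc (Tn n) (Tn n + en n / lam), ((y, t') : Pt d) ∈ parCyl d 2 := by
          intro y hy t' ht'
          have hny : ‖y‖ < 2 * r := by
            have h1 : ‖y‖ ≤ dist y xb + ‖xb‖ := by
              rw [← dist_zero_right y, ← dist_zero_right xb]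
              exact dist_triangle y xb 0
            have := hsnler n
            linarith
          apply hmemD y t' hny
          · have := hTnn n; linarith [ht'.1]
          · have h2 := ht'.2
            rw [hTstep n] at h2
            have := hTinf (n+1)
            linarith [hTsmall]
        have hstep := cleaning_step sol (hsnpos n) (henpos n) hlamn hlampos' hDn ih
        rw [hTstep n] at hstep
        have hsnle : sn (n+1) ≤ sn n := by
          rw [hsn]
          exact div_le_div_of_nonneg_left (le_of_lt hr)
            (pow_pos (by linarith) n) (pow_le_pow_right₀ hsqrt2 (Nat.le_succ n))
        have h5 := hstep x (le_trans hxd hsnle)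
        rw [hqn n] at h5
        calc w (x, Tn (n+1)) ≤ δ * dist x xb ^ 2 := h5
          _ ≤ δ * sn (n+1) ^ 2 := by
              apply mul_le_mul_of_nonneg_left _ (le_of_lt hδ)
              exact pow_le_pow_left₀ dist_nonneg hxd 2
          _ = δ * (r^2 / 2^(n+1)) := by rw [hsq]
          _ = en (n+1) := by rw [hen]; ring
    -- pass to the limit at the center point
    set Tinf : ℝ := 2 * (δ * r^2 / lam) with hTinfdef
    have hmemXb : ∀ t' : ℝ, 0 ≤ t' → t' < 4 → ((xb, t') : Pt d) ∈ parCyl d 2 := by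
      intro t' h1 h2
      exact hmemD xb t' (by linarith) (by linarith) h2
    have hwTn : ∀ n, w (xb, Tinf) ≤ en n := by
      intro n
      have h1 : w (xb, Tn n) ≤ en n := hiter n xb (by
        rw [dist_self]; exact le_of_lt (hsnpos n))
      have h2 : w (xb, Tinf) ≤ w (xb, Tn n) := by
        apply sol.mono xb (Tn n) Tinf (hTinf n)
        intro t' ht'
        apply hmemXb t' (le_trans (hTnn n) ht'.1)
        linarith [ht'.2, hTsmall]
      linarith
    have hw0 : w (xb, Tinf) = 0 := by
      have hnn : 0 ≤ w (xb, Tinf) :=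
        sol.nonneg _ (hmemXb Tinf (by positivity) (by linarith [hTsmall]))
      rcases lt_or_eq_of_le hnn with h | h
      · exfalso
        obtain ⟨n, hn⟩ := pow_unbounded_of_one_lt (δ * r^2 / w (xb, Tinf)) (one_lt_two)
        have h2 : en n < w (xb, Tinf) := by
          rw [hen, div_lt_iff₀ (by positivity)]
          rw [div_lt_iff₀ h] at hn
          linarith [hn]
        linarith [hwTn n]
      · exact h.symm
    -- conclude
    have hTinft : Tinf ≤ t := by
      have h1 : Tinf ≤ 4 * (d:ℝ) * δ * r^2 := by
        rw [hTinfdef, show 2 * (δ * r^2 / lam) = (2 * (δ * r^2))/lam by ring,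
          div_le_iff₀ hlampos']
        have h9 : 0 < δ * r^2 := mul_pos hδ (pow_pos hr 2)
        have hA : 2*(δ*r^2) ≤ (19/20)*(4*(δ*r^2)) := by linarith
        have hB : (19/20)*(4*(δ*r^2)) ≤ lam*(4*(δ*r^2)) :=
          mul_le_mul_of_nonneg_right (le_of_lt hlampos) (by positivity)
        have hdX : 1*(δ*r^2) ≤ (d:ℝ)*(δ*r^2) :=
          mul_le_mul_of_nonneg_right hd1 (le_of_lt h9)
        have hC : lam*(4*(δ*r^2)) ≤ lam*(4*(d:ℝ)*(δ*r^2)) :=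
          mul_le_mul_of_nonneg_left (by linarith) (le_of_lt hlampos')
        nlinarith [hA, hB, hC]
      calc Tinf ≤ 4 * (d:ℝ) * δ * r^2 := h1
        _ = 4 * (d:ℝ) * (δ * r^2) := by ring
        _ ≤ t := by have := ht.1; linarith [this]
    have hfin : w (xb, t) ≤ w (xb, Tinf) := by
      apply sol.mono xb Tinf t hTinft
      intro t' ht'
      apply hmemXb t' (le_trans (by positivity) ht'.1)
      have h2 := ht'.2
      have h3 : t ≤ r^2 := ht.2
      nlinarith [hr1]
    have hnn : 0 ≤ w (xb, t) :=
      sol.nonneg _ (hmemXb t (le_trans (by positivity) ht.1) (by nlinarith [ht.2]))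
    linarith [hfin, hw0, hnn]
end

section
/- Let d ≥ 1, β ≥ 0, and let E ⊆ ℝ^d × (−1,1) be a set whose spatial projection π_x(E) := {x ∈ ℝ^d : (x,t) ∈ E for some t} has (Euclidean) Hausdorff dimension at most β. Assume that for every (x₀,t₀) ∈ E there exist constants C > 0 and ρ > 0 such that {(x,t) ∈ B_ρ(x₀) × (−1,1) : t − t₀ < −C|x − x₀|²} ∩ E = ∅. Then dim_par(E) ≤ β. -/
open Set MeasureTheory Filter Metric Topology
open scoped ENNReal NNReal

/-- A GMT lemma: if `E ⊆ ℝ^d × (−1,1)` has spatial projection of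
Hausdorff dimension at most `β`, and every point of `E` admits a backwards-in-time
parabola free of other points of `E`, then `dim_par(E) ≤ β`. -/
theorem parabolic_dimension_from_projection_and_cleaning
    (d : ℕ) (hd : 1 ≤ d) (β : ℝ) (hβ : 0 ≤ β) (E : Set (Pt d))
    (hE : ∀ p ∈ E, p.2 ∈ Ioo (-1:ℝ) 1)
    (hproj : dimH {x : EucSp d | ∃ t : ℝ, ((x, t) : Pt d) ∈ E} ≤ ENNReal.ofReal β)
    (hclean : ∀ p ∈ E, ∃ C : ℝ, 0 < C ∧ ∃ ρ : ℝ, 0 < ρ ∧ ∀ q : Pt d,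
      q.1 ∈ Metric.ball p.1 ρ → q.2 ∈ Ioo (-1:ℝ) 1 →
      q.2 - p.2 < -C * ‖q.1 - p.1‖^2 → q ∉ E) :
    dimPar E ≤ ENNReal.ofReal β := by
    classical
  obtain ⟨u, hu⟩ : ∃ u : ℕ → EucSp d, DenseRange u :=
    ⟨TopologicalSpace.denseSeq (EucSp d), TopologicalSpace.denseRange_denseSeq _⟩
  set E' : ℕ × ℕ → Set (Pt d) := fun nk =>
    {p | p ∈ E ∧
      (∀ q : Pt d, q.1 ∈ Metric.ball p.1 (1/((nk.1:ℝ)+1)) → q.2 ∈ Ioo (-1:ℝ) 1 →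
        q.2 - p.2 < -((nk.1:ℝ)+1) * ‖q.1 - p.1‖^2 → q ∉ E) ∧
      p.1 ∈ Metric.ball (u nk.2) (1/(2*((nk.1:ℝ)+1)))} with hE'def
  -- key estimate on each piece
  have key : ∀ nk : ℕ × ℕ, ∀ p ∈ E' nk, ∀ q ∈ E' nk,
      |p.2 - q.2| ≤ ((nk.1:ℝ)+1) * ‖p.1 - q.1‖^2 := by
    intro nk p hp q hq
    have hdx : ‖p.1 - q.1‖ < 1/((nk.1:ℝ)+1) := by
      have h1 := hp.2.2; have h2 := hq.2.2
      rw [Metric.mem_ball] at h1 h2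
      have hcm : dist (u nk.2) q.1 = dist q.1 (u nk.2) := dist_comm _ _
      calc ‖p.1 - q.1‖ = dist p.1 q.1 := (dist_eq_norm _ _).symm
        _ ≤ dist p.1 (u nk.2) + dist (u nk.2) q.1 := dist_triangle _ _ _
        _ < 1/(2*((nk.1:ℝ)+1)) + 1/(2*((nk.1:ℝ)+1)) := by rw [hcm]; linarith
        _ = 1/((nk.1:ℝ)+1) := by
            have h0 : ((nk.1:ℝ)+1) ≠ 0 := by positivity
            field_simp
            norm_num
    have hnr : ‖q.1 - p.1‖ = ‖p.1 - q.1‖ := norm_sub_rev _ _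
    have h1 : ¬ (q.2 - p.2 < -((nk.1:ℝ)+1) * ‖q.1 - p.1‖^2) := by
      intro h
      exact hp.2.1 q (by rw [Metric.mem_ball, dist_eq_norm, hnr]; exact hdx)
        (hE q hq.1) h hq.1
    have h2 : ¬ (p.2 - q.2 < -((nk.1:ℝ)+1) * ‖p.1 - q.1‖^2) := by
      intro h
      exact hq.2.1 p (by rw [Metric.mem_ball, dist_eq_norm]; exact hdx)
        (hE p hp.1) h hp.1
    rw [hnr] at h1
    rw [abs_le]
    constructor <;> nlinarith [norm_nonneg (p.1 - q.1)]
  -- E is covered by the pieces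
  have cover : E ⊆ ⋃ nk : ℕ × ℕ, E' nk := by
    intro p hp
    obtain ⟨C, hC, ρ, hρ, hcl⟩ := hclean p hp
    obtain ⟨n, hn⟩ := exists_nat_ge (max C (1/ρ))
    have hnC : C ≤ (n:ℝ)+1 := le_trans (le_max_left _ _) (by linarith)
    have hnρ : 1/((n:ℝ)+1) ≤ ρ := by
      have h1 : 1/ρ ≤ (n:ℝ)+1 := le_trans (le_max_right _ _) (by linarith)
      rw [div_le_iff₀ hρ] at h1
      rw [div_le_iff₀ (by positivity : (0:ℝ) < (n:ℝ)+1)]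
      nlinarith
    obtain ⟨k, hk⟩ : ∃ k, dist p.1 (u k) < 1/(2*((n:ℝ)+1)) := by
      have hpos : (0:ℝ) < 1/(2*((n:ℝ)+1)) := by positivity
      obtain ⟨y, hyb, k, rfl⟩ := Metric.dense_iff.mp hu p.1 _ hpos
      exact ⟨k, by rwa [Metric.mem_ball, dist_comm] at hyb⟩
    refine mem_iUnion.mpr ⟨(n, k), hp, ?_, ?_⟩
    · intro q hq1 hq2 hq3
      refine hcl q ?_ hq2 ?_
      · rw [Metric.mem_ball] at hq1 ⊢
        exact lt_of_lt_of_le hq1 hnρ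
      · have hnn : (0:ℝ) ≤ ‖q.1 - p.1‖^2 := by positivity
        nlinarith
    · rwa [Metric.mem_ball]
  -- each piece has parabolic dimension ≤ β
  have piece : ∀ nk : ℕ × ℕ, dimH (toParPt '' E' nk) ≤ ENNReal.ofReal β := by
    intro nk
    set n : ℕ := nk.1
    set S : Set (EucSp d) := Prod.fst '' E' nk with hS
    set tf : EucSp d → ℝ := fun x =>
      if h : ∃ t : ℝ, ((x, t) : Pt d) ∈ E' nk then h.choose else 0 with htf
    set f : EucSp d → ParPt d := fun x => ⟨x, tf x⟩ with hf
    have hmem : ∀ x ∈ S, ((x, tf x) : Pt d) ∈ E' nk := by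
      intro x hx
      obtain ⟨p, hp, rfl⟩ := hx
      have hex : ∃ t : ℝ, ((p.1, t) : Pt d) ∈ E' nk := ⟨p.2, hp⟩
      simp only [htf, dif_pos hex]
      exact hex.choose_spec
    set K : ℝ := 1 + Real.sqrt ((n:ℝ)+1) with hK
    have hK0 : 0 ≤ K := by positivity
    have hlip : LipschitzOnWith K.toNNReal f S := by
      rw [lipschitzOnWith_iff_dist_le_mul]
      intro x hx y hy
      have h1 := hmem x hx
      have h2 := hmem y hy
      have hk := key nk _ h1 _ h2
      simp only at hk
      have hd : dist (f x) (f y) = dist x y + Real.sqrt (dist (tf x) (tf y)) := rfl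
      have hst : Real.sqrt (dist (tf x) (tf y)) ≤ Real.sqrt ((n:ℝ)+1) * dist x y := by
        rw [Real.dist_eq]
        have h3 : |tf x - tf y| ≤ ((n:ℝ)+1) * ‖x - y‖^2 := hk
        calc Real.sqrt |tf x - tf y| ≤ Real.sqrt (((n:ℝ)+1) * ‖x - y‖^2) :=
              Real.sqrt_le_sqrt h3
          _ = Real.sqrt ((n:ℝ)+1) * ‖x - y‖ := by
              rw [Real.sqrt_mul (by positivity), Real.sqrt_sq (norm_nonneg _)]
          _ = Real.sqrt ((n:ℝ)+1) * dist x y := by rw [dist_eq_norm]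
      have hco : (K.toNNReal : ℝ) = K := Real.coe_toNNReal _ hK0
      rw [hd, hco, hK]
      have : (1 + Real.sqrt ((n:ℝ)+1)) * dist x y
          = dist x y + Real.sqrt ((n:ℝ)+1) * dist x y := by ring
      rw [this]
      linarith
    have himg : toParPt '' E' nk ⊆ f '' S := by
      rintro _ ⟨p, hp, rfl⟩
      have hxS : p.1 ∈ S := ⟨p, hp, rfl⟩
      refine ⟨p.1, hxS, ?_⟩
      have h1 := hmem p.1 hxS
      have hk := key nk _ h1 _ hp
      simp only [sub_self, norm_zero] at hk
      have ht : tf p.1 = p.2 := by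
        have : |tf p.1 - p.2| ≤ 0 := by
          have := hk; nlinarith [abs_nonneg (tf p.1 - p.2)]
        have := abs_nonneg (tf p.1 - p.2)
        have h0 : |tf p.1 - p.2| = 0 := le_antisymm ‹|tf p.1 - p.2| ≤ 0› this
        have := abs_eq_zero.mp h0
        linarith
      show f p.1 = toParPt p
      simp only [hf, toParPt, ht]
    have hSsub : S ⊆ {x : EucSp d | ∃ t : ℝ, ((x, t) : Pt d) ∈ E} := by
      rintro _ ⟨p, hp, rfl⟩
      exact ⟨p.2, hp.1⟩
    calc dimH (toParPt '' E' nk) ≤ dimH (f '' S) := dimH_mono himg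
      _ ≤ dimH S := hlip.dimH_image_le
      _ ≤ dimH {x : EucSp d | ∃ t : ℝ, ((x, t) : Pt d) ∈ E} := dimH_mono hSsub
      _ ≤ ENNReal.ofReal β := hproj
  calc dimPar E = dimH (toParPt '' E) := rfl
    _ ≤ dimH (⋃ nk : ℕ × ℕ, toParPt '' E' nk) := by
        refine dimH_mono ?_
        rw [← image_iUnion]
        exact image_mono cover
    _ = ⨆ nk : ℕ × ℕ, dimH (toParPt '' E' nk) := dimH_iUnion _
    _ ≤ ENNReal.ofReal β := iSup_le piece
end

section
/- Let d ≥ 1, let A be a nonzero symmetric d×d real matrix, let f(x) = ⟨Ax, x⟩, and let α = min{|λ| : λ is a nonzero eigenvalue of A}. Then for every x ∈ ℝ^d, the Euclidean distance from x to the zero set {y ∈ ℝ^d : f(y) = 0} satisfies dist(x, {f = 0}) ≤ α^{−1/2} |f(x)|^{1/2}. -/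
open Set MeasureTheory Filter Metric Topology
open scoped ENNReal NNReal

open scoped RealInnerProductSpace in
private lemma spectral {d : ℕ} (A : Matrix (Fin d) (Fin d) ℝ) (hH : A.IsHermitian) (z : EucSp d) :
    quadForm A z = ∑ i : Fin d, hH.eigenvalues i * (hH.eigenvectorBasis.repr z i)^2 := by
  set B := hH.eigenvectorBasis with hB
  set c : Fin d → ℝ := fun i => B.repr z i with hc
  have hz : ∑ i : Fin d, c i • B i = z := B.sum_repr z
  have hAz : (WithLp.toLp 2 (A.mulVec z) : EucSp d) = ∑ i : Fin d, (c i * hH.eigenvalues i) • B i := by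
    conv_lhs => rw [← hz]
    have : (A.mulVec (∑ i : Fin d, c i • B i) : Fin d → ℝ)
        = ∑ i : Fin d, (c i * hH.eigenvalues i) • (B i : Fin d → ℝ) := by
      rw [← A.mulVecLin_apply, map_sum]
      refine Finset.sum_congr rfl fun i _ => ?_
      rw [_root_.map_smul, A.mulVecLin_apply]
      show c i • (A.mulVec ⇑(B i)) = _
      rw [hH.mulVec_eigenvectorBasis i, smul_smul]
    rw [WithLp.ofLp_sum]; simp only [WithLp.ofLp_smul]; rw [this]; ext k; simp [WithLp.ofLp_sum, Finset.sum_apply]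
  have h1 : quadForm A z = ⟪z, (WithLp.toLp 2 (A.mulVec z) : EucSp d)⟫ := by
    rw [PiLp.inner_apply]
    simp only [quadForm, RCLike.inner_apply, starRingEnd_apply, star_trivial]
    conv_rhs => enter [2, i]; rw [mul_comm]
    show ∑ i : Fin d, ∑ j : Fin d, A i j * z i * z j
        = ∑ i : Fin d, z i * (A.mulVec (fun j => z j)) i
    simp only [Matrix.mulVec, dotProduct, Finset.mul_sum]
    rw [Finset.sum_comm]
    refine Finset.sum_congr rfl fun i _ => Finset.sum_congr rfl fun j _ => ?_
    have hs : A j i = A i j := by simpa using hH.apply i j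
    rw [hs]; ring
  rw [h1, hAz]
  conv_lhs => rw [← hz]
  rw [B.orthonormal.inner_sum]
  simp only [starRingEnd_apply, star_trivial]
  exact Finset.sum_congr rfl fun i _ => by ring

private lemma aux_constr {d : ℕ} (B : OrthonormalBasis (Fin d) ℝ (EucSp d)) (lam : Fin d → ℝ)
    (α : ℝ) (hαpos : 0 < α) (hlam : ∀ i, lam i ≠ 0 → α ≤ |lam i|) (x : EucSp d)
    (hx : 0 < ∑ i : Fin d, lam i * (B.repr x i)^2) :
    ∃ y : EucSp d, (∑ i : Fin d, lam i * (B.repr y i)^2 = 0) ∧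
      α * ‖x - y‖^2 ≤ ∑ i : Fin d, lam i * (B.repr x i)^2 := by
  classical
  set v : EuclideanSpace ℝ (Fin d) := B.repr x with hv
  set P : Finset (Fin d) := Finset.univ.filter (fun i => 0 < lam i) with hP
  set Sp : ℝ := ∑ i ∈ P, lam i * (v i)^2 with hSp
  set Sm : ℝ := ∑ i ∈ Finset.univ.filter (fun i => ¬ 0 < lam i), lam i * (v i)^2 with hSm
  have hsplit : Sp + Sm = ∑ i : Fin d, lam i * (v i)^2 :=
    Finset.sum_filter_add_sum_filter_not _ _ _
  have hSmle : Sm ≤ 0 := by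
    apply Finset.sum_nonpos
    intro i hi
    simp only [Finset.mem_filter, not_lt] at hi
    have := hi.2
    nlinarith [sq_nonneg (v i)]
  have hxv : 0 < ∑ i : Fin d, lam i * (v i)^2 := hx
  have hSppos : 0 < Sp := by linarith
  set s : ℝ := Real.sqrt (-Sm / Sp) with hs
  have hs0 : 0 ≤ s := Real.sqrt_nonneg _
  have hs2 : s^2 = -Sm / Sp := Real.sq_sqrt (div_nonneg (by linarith) hSppos.le)
  have hs1 : s ≤ 1 := by
    rw [hs, show (1:ℝ) = Real.sqrt 1 by simp]
    apply Real.sqrt_le_sqrt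
    rw [div_le_one hSppos]; linarith
  -- the modified coefficient vector
  set v' : EuclideanSpace ℝ (Fin d) :=
    (EuclideanSpace.equiv (Fin d) ℝ).symm (fun i => if 0 < lam i then s * v i else v i) with hv'
  have hv'app : ∀ i, v' i = if 0 < lam i then s * v i else v i := fun i => rfl
  refine ⟨B.repr.symm v', ?_, ?_⟩
  · have hry : B.repr (B.repr.symm v') = v' := B.repr.apply_symm_apply v'
    rw [hry]
    have : ∑ i : Fin d, lam i * (v' i)^2 = s^2 * Sp + Sm := by
      rw [← Finset.sum_filter_add_sum_filter_not Finset.univ (fun i => 0 < lam i)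
        (fun i => lam i * (v' i)^2)]
      congr 1
      · rw [hSp, Finset.mul_sum]
        refine Finset.sum_congr rfl fun i hi => ?_
        simp only [hP, Finset.mem_filter, Finset.mem_univ, true_and] at hi
        rw [hv'app i, if_pos hi]; ring
      · refine Finset.sum_congr rfl fun i hi => ?_
        simp only [Finset.mem_filter, Finset.mem_univ, true_and] at hi
        rw [hv'app i, if_neg hi]
    rw [this, hs2]
    field_simp; ring
  · have hry : B.repr (B.repr.symm v') = v' := B.repr.apply_symm_apply v'
    have hnorm : ‖x - B.repr.symm v'‖^2 = ∑ i : Fin d, (v i - v' i)^2 := by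
      rw [← B.repr.norm_map, map_sub, hry]
      rw [EuclideanSpace.norm_eq, Real.sq_sqrt (by positivity)]
      refine Finset.sum_congr rfl fun i _ => ?_
      rw [PiLp.sub_apply, Real.norm_eq_abs, sq_abs]
    have hdiff : ∑ i : Fin d, (v i - v' i)^2 = (1-s)^2 * ∑ i ∈ P, (v i)^2 := by
      rw [← Finset.sum_filter_add_sum_filter_not Finset.univ (fun i => 0 < lam i)
        (fun i => (v i - v' i)^2), Finset.mul_sum]
      have h2 : ∑ i ∈ Finset.univ.filter (fun i => ¬ 0 < lam i), (v i - v' i)^2 = 0 := by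
        apply Finset.sum_eq_zero
        intro i hi
        simp only [Finset.mem_filter, Finset.mem_univ, true_and] at hi
        rw [hv'app i, if_neg hi]; ring
      rw [h2, add_zero]
      refine Finset.sum_congr rfl fun i hi => ?_
      simp only [hP, Finset.mem_filter, Finset.mem_univ, true_and] at hi
      rw [hv'app i, if_pos hi]; ring
    rw [hnorm, hdiff]
    have hterm : α * ∑ i ∈ P, (v i)^2 ≤ Sp := by
      rw [hSp, Finset.mul_sum]
      refine Finset.sum_le_sum fun i hi => ?_
      simp only [hP, Finset.mem_filter, Finset.mem_univ, true_and] at hi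
      have h1 : α ≤ lam i := by
        have := hlam i (ne_of_gt hi)
        rwa [abs_of_pos hi] at this
      nlinarith [sq_nonneg (v i)]
    have hv2 : 0 ≤ ∑ i ∈ P, (v i)^2 := Finset.sum_nonneg fun i _ => sq_nonneg _
    have hss : s^2 * Sp = -Sm := by rw [hs2]; field_simp
    have key : (1-s)^2 * Sp ≤ Sp + Sm := by nlinarith
    calc α * ((1-s)^2 * ∑ i ∈ P, (v i)^2) = (1-s)^2 * (α * ∑ i ∈ P, (v i)^2) := by ring
      _ ≤ (1-s)^2 * Sp := by nlinarith [sq_nonneg (1-s)]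
      _ ≤ Sp + Sm := key
      _ = _ := hsplit


/-- Łojasiewicz inequality for quadratic forms: if `A ≠ 0` is symmetric,
`f(x) = ⟨Ax,x⟩` and `α` is the minimum of the absolute values of the nonzero eigenvalues
of `A`, then `dist(x, {f = 0}) ≤ α^{−1/2} |f(x)|^{1/2}` for every `x`. -/
theorem lojasiewicz_quadratic_form
    (d : ℕ) (hd : 1 ≤ d) (A : Matrix (Fin d) (Fin d) ℝ) (hA : A.IsSymm) (hA0 : A ≠ 0)
    (α : ℝ)
    (hα : IsLeast {a : ℝ | ∃ μ : ℝ, μ ≠ 0 ∧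
      (∃ v : EucSp d, v ≠ 0 ∧ ∀ i, (∑ j : Fin d, A i j * v j) = μ * v i) ∧
      a = |μ|} α) :
    ∀ x : EucSp d,
      Metric.infDist x {y : EucSp d | quadForm A y = 0} ≤
        (Real.sqrt α)⁻¹ * Real.sqrt |quadForm A x| := by
    classical
  have hH : A.IsHermitian := by
    rw [Matrix.IsHermitian, Matrix.conjTranspose_eq_transpose_of_trivial]; exact hA
  set B := hH.eigenvectorBasis with hB
  set lam := hH.eigenvalues with hlamdef
  have hα0 : 0 < α := by
    obtain ⟨μ, hμ, -, hαμ⟩ := hα.1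
    rw [hαμ]; exact abs_pos.mpr hμ
  have heig : ∀ i, lam i ≠ 0 → α ≤ |lam i| := by
    intro i hi
    apply hα.2
    refine ⟨lam i, hi, ⟨B i, B.orthonormal.ne_zero i, ?_⟩, rfl⟩
    intro k
    have h := congrFun (hH.mulVec_eigenvectorBasis i) k
    simpa [Matrix.mulVec, dotProduct] using h
  have hspec : ∀ z : EucSp d, quadForm A z = ∑ i : Fin d, lam i * (B.repr z i)^2 := by
    intro z; rw [hB, hlamdef]; exact spectral A hH z
  intro x
  have hRHS : 0 ≤ (Real.sqrt α)⁻¹ * Real.sqrt |quadForm A x| := by positivity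
  rcases eq_or_ne (quadForm A x) 0 with h0 | h0
  · have hmem : x ∈ {y : EucSp d | quadForm A y = 0} := h0
    rw [Metric.infDist_zero_of_mem hmem]; exact hRHS
  · obtain ⟨y, hy0, hyle⟩ : ∃ y, quadForm A y = 0 ∧ α * ‖x - y‖^2 ≤ |quadForm A x| := by
      rcases h0.lt_or_gt with hneg | hpos
      · have hx' : 0 < ∑ i : Fin d, (-lam i) * (B.repr x i)^2 := by
          have h1 : ∑ i : Fin d, (-lam i) * (B.repr x i)^2 = -quadForm A x := by
            rw [hspec x, ← Finset.sum_neg_distrib]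
            exact Finset.sum_congr rfl fun i _ => by ring
          rw [h1]; linarith
        obtain ⟨y, h1, h2⟩ := aux_constr B (fun i => -lam i) α hα0
          (fun i hi => by simpa using heig i (by simpa using hi)) x hx'
        refine ⟨y, ?_, ?_⟩
        · have h3 : ∑ i : Fin d, (-lam i) * (B.repr y i)^2 = -quadForm A y := by
            rw [hspec y, ← Finset.sum_neg_distrib]
            exact Finset.sum_congr rfl fun i _ => by ring
          rw [h3] at h1; linarith
        · have h1 : ∑ i : Fin d, (-lam i) * (B.repr x i)^2 = -quadForm A x := by
            rw [hspec x, ← Finset.sum_neg_distrib]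
            exact Finset.sum_congr rfl fun i _ => by ring
          rw [abs_of_neg hneg]; rw [h1] at h2; linarith
      · have hx' : 0 < ∑ i : Fin d, lam i * (B.repr x i)^2 := by
          rw [← hspec x]; exact hpos
        obtain ⟨y, h1, h2⟩ := aux_constr B lam α hα0 heig x hx'
        refine ⟨y, ?_, ?_⟩
        · rw [hspec y]; exact h1
        · rw [abs_of_pos hpos, hspec x]; exact h2
    have hsα : 0 < Real.sqrt α := Real.sqrt_pos.mpr hα0
    have h3 : Real.sqrt α * ‖x - y‖ ≤ Real.sqrt |quadForm A x| := by
      have hsq : (Real.sqrt α * ‖x - y‖)^2 ≤ |quadForm A x| := by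
        rw [mul_pow, Real.sq_sqrt hα0.le]; exact hyle
      have := Real.sqrt_le_sqrt hsq
      rwa [Real.sqrt_sq (by positivity)] at this
    calc Metric.infDist x {y : EucSp d | quadForm A y = 0} ≤ dist x y :=
          Metric.infDist_le_dist_of_mem hy0
      _ = ‖x - y‖ := by rw [dist_eq_norm]
      _ ≤ (Real.sqrt α)⁻¹ * Real.sqrt |quadForm A x| := by
          rw [inv_mul_eq_div, le_div_iff₀ hsα]
          linarith [h3]
end
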